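/- Let h : ℝ² → ℝ be continuous and satisfy conditions (h1)–(h4), and let p, q be relatively prime integers with q > 0. If x = (x_i)_{i∈ℤ} is an h-minimal configuration with rotation number ρ(x) = p/q, then exactly one of the following three alternatives holds: (a) x_{i+q} > x_i + p for all i ∈ ℤ; (b) x_{i+q} = x_i + p for all i ∈ ℤ; (c) x_{i+q} < x_i + p for all i ∈ ℤ. -/

import Mathlib

open Filter Topology MeasureTheory

/-- The finite segment of `x` between indices `j` and `k` is `h`-minimal. -/
def IsMinSegment (h : ℝ → ℝ → ℝ) (j k : ℤ) (x : ℤ → ℝ) : Prop :=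
  ∀ y : ℤ → ℝ, y j = x j → y k = x k →
    ∑ i ∈ Finset.Ico j k, h (x i) (x (i + 1)) ≤ ∑ i ∈ Finset.Ico j k, h (y i) (y (i + 1))

/-- A bi-infinite configuration is `h`-minimal if every finite segment of it is minimal. -/
def MinimalConfig (h : ℝ → ℝ → ℝ) (x : ℤ → ℝ) : Prop :=
  ∀ j k : ℤ, j < k → IsMinSegment h j k x

/-- The segment `(a, b, c)` is `h`-minimal (endpoints `a`, `c` fixed, middle point varies). -/
def MinTriple (h : ℝ → ℝ → ℝ) (a b c : ℝ) : Prop :=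
  ∀ m : ℝ, h a b + h b c ≤ h a m + h m c

/-- Condition (h1): periodicity. -/
def CondH1 (h : ℝ → ℝ → ℝ) : Prop := ∀ x x' : ℝ, h (x + 1) (x' + 1) = h x x'

/-- Condition (h2): `h (x, x+ξ) → +∞` as `|ξ| → ∞`, uniformly in `x`. -/
def CondH2 (h : ℝ → ℝ → ℝ) : Prop :=
  ∀ M : ℝ, ∃ R : ℝ, ∀ x ξ : ℝ, R ≤ |ξ| → M ≤ h x (x + ξ)

/-- Condition (h3). -/
def CondH3 (h : ℝ → ℝ → ℝ) : Prop :=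
  ∀ x ξ x' ξ' : ℝ, x < ξ → x' < ξ' → h x x' + h ξ ξ' < h x ξ' + h ξ x'

/-- Condition (h4). -/
def CondH4 (h : ℝ → ℝ → ℝ) : Prop :=
  ∀ xb x x' ξb ξ' : ℝ, MinTriple h xb x x' → MinTriple h ξb x ξ' →
    (xb ≠ ξb ∨ x' ≠ ξ') → (xb - ξb) * (x' - ξ') < 0

/-- Condition (h5). -/
def CondH5 (h : ℝ → ℝ → ℝ) : Prop :=
  ∃ ρ : ℝ → ℝ → ℝ, Continuous (Function.uncurry ρ) ∧ (∀ s s' : ℝ, 0 < ρ s s') ∧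
    ∀ x ξ x' ξ' : ℝ, x < ξ → x' < ξ' →
      (∫ s in x..ξ, ∫ s' in x'..ξ', ρ s s') ≤ h x ξ' + h ξ x' - h x x' - h ξ ξ'

/-- Condition (h6θ). -/
def CondH6 (θ : ℝ) (h : ℝ → ℝ → ℝ) : Prop :=
  (∀ x' : ℝ, ConvexOn ℝ Set.univ fun x => θ * (x - x') ^ 2 / 2 - h x x') ∧
  (∀ x : ℝ, ConvexOn ℝ Set.univ fun x' => θ * (x' - x) ^ 2 / 2 - h x x')

noncomputable def act (h : ℝ → ℝ → ℝ) (z : ℤ → ℝ) (j k : ℤ) : ℝ :=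
  ∑ i ∈ Finset.Ico j k, h (z i) (z (i + 1))

lemma act_min (h : ℝ → ℝ → ℝ) {x : ℤ → ℝ} (hx : MinimalConfig h x) {j k : ℤ} (hjk : j < k)
    (w : ℤ → ℝ) (hj : w j = x j) (hk : w k = x k) : act h x j k ≤ act h w j k :=
  hx j k hjk w hj hk

lemma hshift_nat {h : ℝ → ℝ → ℝ} (h1 : CondH1 h) (n : ℕ) (a b : ℝ) :
    h (a + n) (b + n) = h a b := by
  induction n with
  | zero => simp
  | succ k ih =>
    have e1 : a + ((k : ℕ) + 1 : ℕ) = (a + k) + 1 := by push_cast; ring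
    have e2 : b + ((k : ℕ) + 1 : ℕ) = (b + k) + 1 := by push_cast; ring
    rw [e1, e2, h1, ih]

lemma hshift {h : ℝ → ℝ → ℝ} (h1 : CondH1 h) (n : ℤ) (a b : ℝ) :
    h (a + n) (b + n) = h a b := by
  obtain ⟨m, rfl | rfl⟩ := Int.eq_nat_or_neg n
  · exact_mod_cast hshift_nat h1 m a b
  · have := hshift_nat h1 m (a + (-(m : ℤ) : ℤ)) (b + (-(m : ℤ) : ℤ))
    push_cast at this ⊢
    rw [← this]; ring_nf

lemma act_index_shift (h : ℝ → ℝ → ℝ) (z : ℤ → ℝ) (q j k : ℤ) :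
    act h (fun i => z (i + q)) j k = act h z (j + q) (k + q) := by
  unfold act
  rw [← Finset.map_add_right_Ico j k q, Finset.sum_map]
  apply Finset.sum_congr rfl
  intro i _
  simp only [addRightEmbedding_apply]
  congr 2
  ring

lemma sum_shift (f : ℤ → ℝ) (j k q : ℤ) :
    ∑ i ∈ Finset.Ico (j + q) (k + q), f i = ∑ i ∈ Finset.Ico j k, f (i + q) := by
  rw [← Finset.map_add_right_Ico j k q, Finset.sum_map]
  apply Finset.sum_congr rfl
  intro i _
  simp [addRightEmbedding_apply]

lemma minimal_translate {h : ℝ → ℝ → ℝ} (h1 : CondH1 h) {x : ℤ → ℝ}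
    (hx : MinimalConfig h x) (q p : ℤ) :
    MinimalConfig h (fun i => x (i + q) - p) := by
  intro j k hjk w hwj hwk
  set w' : ℤ → ℝ := fun i => w (i - q) + p with hw'def
  have key := hx (j + q) (k + q) (by omega) w'
      (by simp only [hw'def]; rw [show j + q - q = j by ring, hwj]; show x (j+q) - (p:ℝ) + p = x (j+q); ring)
      (by simp only [hw'def]; rw [show k + q - q = k by ring, hwk]; show x (k+q) - (p:ℝ) + p = x (k+q); ring)
  have lhs : (∑ i ∈ Finset.Ico (j+q) (k+q), h (x i) (x (i + 1)))
      = ∑ i ∈ Finset.Ico j k,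
          h ((fun i => x (i+q) - (p:ℝ)) i) ((fun i => x (i+q) - (p:ℝ)) (i+1)) := by
    rw [sum_shift (fun i => h (x i) (x (i+1))) j k q]
    apply Finset.sum_congr rfl
    intro i _
    simp only []
    rw [show i + 1 + q = i + q + 1 by ring]
    have := hshift h1 p (x (i+q) - p) (x (i+q+1) - p)
    simp only [sub_add_cancel] at this
    exact this
  have rhs : (∑ i ∈ Finset.Ico (j+q) (k+q), h (w' i) (w' (i + 1)))
      = ∑ i ∈ Finset.Ico j k, h (w i) (w (i + 1)) := by
    rw [sum_shift (fun i => h (w' i) (w' (i+1))) j k q]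
    apply Finset.sum_congr rfl
    intro i _
    simp only [hw'def]
    rw [show i + q - q = i by ring, show i + q + 1 - q = i + 1 by ring]
    exact hshift h1 p (w i) (w (i+1))
  rw [lhs, rhs] at key
  exact key

lemma minTriple_of_minimal {h : ℝ → ℝ → ℝ} {x : ℤ → ℝ} (hx : MinimalConfig h x) (i : ℤ) :
    MinTriple h (x i) (x (i + 1)) (x (i + 2)) := by
  intro m
  have hIco : Finset.Ico i (i + 2) = {i, i + 1} := by
    ext a; simp only [Finset.mem_Ico, Finset.mem_insert, Finset.mem_singleton]; omega
  have hne : i ≠ i + 1 := by omega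
  have key := hx i (i + 2) (by omega) (Function.update x (i + 1) m)
      (Function.update_of_ne (by omega) _ _) (Function.update_of_ne (by omega) _ _)
  rw [hIco, Finset.sum_pair hne, Finset.sum_pair hne] at key
  rw [Function.update_of_ne (by omega : i ≠ i + 1), Function.update_self,
      Function.update_of_ne (by omega : i + 1 + 1 ≠ i + 1)] at key
  rw [show i + 1 + 1 = i + 2 by ring] at key
  exact key

lemma rigidity {h : ℝ → ℝ → ℝ} (h4 : CondH4 h) {x y : ℤ → ℝ}
    (hx : MinimalConfig h x) (hy : MinimalConfig h y)
    (i : ℤ) (e0 : x i = y i) (e1 : x (i + 1) = y (i + 1)) : ∀ j, x j = y j := by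
  have fwd : ∀ n : ℕ, x (i + n) = y (i + n) ∧ x (i + n + 1) = y (i + n + 1) := by
    intro n
    induction n with
    | zero => simpa using ⟨e0, e1⟩
    | succ k ih =>
      obtain ⟨ha, hb⟩ := ih
      have i1 : i + ((k+1:ℕ):ℤ) = i + k + 1 := by push_cast; ring
      have i2 : i + ((k+1:ℕ):ℤ) + 1 = i + k + 2 := by push_cast; ring
      constructor
      · rw [i1]; exact hb
      · rw [i2]
        by_contra hne
        have Tx := minTriple_of_minimal hx (i + k)
        have Ty := minTriple_of_minimal hy (i + k)
        rw [← hb] at Ty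
        have hlt := h4 _ _ _ _ _ Tx Ty (Or.inr hne)
        rw [ha, sub_self, zero_mul] at hlt
        exact lt_irrefl _ hlt
  have bwd : ∀ n : ℕ, x (i - n) = y (i - n) ∧ x (i - n + 1) = y (i - n + 1) := by
    intro n
    induction n with
    | zero => simpa using ⟨e0, e1⟩
    | succ k ih =>
      obtain ⟨ha, hb⟩ := ih
      have key : x (i - k - 1) = y (i - k - 1) := by
        by_contra hne
        have Tx := minTriple_of_minimal hx (i - k - 1)
        have Ty := minTriple_of_minimal hy (i - k - 1)
        rw [show i - (k:ℤ) - 1 + 1 = i - k by ring, show i - (k:ℤ) - 1 + 2 = i - k + 1 by ring]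
          at Tx Ty
        rw [← ha] at Ty
        have hlt := h4 _ _ _ _ _ Tx Ty (Or.inl hne)
        rw [hb, sub_self, mul_zero] at hlt
        exact lt_irrefl _ hlt
      have i1 : i - ((k+1:ℕ):ℤ) = i - k - 1 := by push_cast; ring
      have i2 : i - ((k+1:ℕ):ℤ) + 1 = i - k := by push_cast; ring
      constructor
      · rw [i1]; exact key
      · rw [i2]; exact ha
  intro j
  rcases le_total i j with hij | hij
  · have := (fwd (j - i).toNat).1
    rwa [show i + ((j - i).toNat : ℤ) = j by omega] at this
  · have := (bwd (i - j).toNat).1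
    rwa [show i - ((i - j).toNat : ℤ) = j by omega] at this

lemma sum_Ico_consec (f : ℤ → ℝ) {m n k : ℤ} (hmn : m ≤ n) (hnk : n ≤ k) :
    ((∑ i ∈ Finset.Ico m n, f i) + ∑ i ∈ Finset.Ico n k, f i) = ∑ i ∈ Finset.Ico m k, f i := by
  rw [← Finset.Ico_union_Ico_eq_Ico hmn hnk,
      Finset.sum_union (Finset.Ico_disjoint_Ico_consecutive m n k)]

lemma EXcore {h : ℝ → ℝ → ℝ} (h3 : CondH3 h) {a b a' b' : ℝ} (h1 : a ≤ b) (h2 : b' ≤ a') :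
    h a b' + h b a' ≤ h a a' + h b b' := by
  rcases eq_or_lt_of_le h1 with rfl | h1'
  · linarith
  rcases eq_or_lt_of_le h2 with rfl | h2'
  · linarith
  exact (h3 a b b' a' h1' h2').le

lemma EX {h : ℝ → ℝ → ℝ} (h3 : CondH3 h) (a b a' b' : ℝ) :
    h (min a b) (min a' b') + h (max a b) (max a' b') ≤ h a a' + h b b' := by
  rcases le_total a b with hab | hab <;> rcases le_total a' b' with hcd | hcd
  · rw [min_eq_left hab, min_eq_left hcd, max_eq_right hab, max_eq_right hcd]
  · rw [min_eq_left hab, min_eq_right hcd, max_eq_right hab, max_eq_left hcd]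
    exact EXcore h3 hab hcd
  · rw [min_eq_right hab, min_eq_left hcd, max_eq_left hab, max_eq_right hcd]
    linarith [EXcore h3 hab hcd]
  · rw [min_eq_right hab, min_eq_right hcd, max_eq_left hab, max_eq_left hcd]
    linarith

/-- The "gain" data: a modified min-configuration with a strict local improvement near `c`. -/
def GainAt (h : ℝ → ℝ → ℝ) (x y : ℤ → ℝ) (U : ℤ → ℝ) (c : ℤ) (δ : ℝ) : Prop :=
  (∀ i, i ≠ c → U i = min (x i) (y i)) ∧
  h (U (c-1)) (U c) + h (max (x (c-1)) (y (c-1))) (max (x c) (y c))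
      + (h (U c) (U (c+1)) + h (max (x c) (y c)) (max (x (c+1)) (y (c+1))))
    ≤ h (x (c-1)) (x c) + h (y (c-1)) (y c)
      + (h (x c) (x (c+1)) + h (y c) (y (c+1))) - δ

def Gain (h : ℝ → ℝ → ℝ) (x y : ℤ → ℝ) : Prop :=
  ∃ (U : ℤ → ℝ) (c : ℤ) (δ : ℝ), 0 < δ ∧ GainAt h x y U c δ

lemma gainAt_symm {h : ℝ → ℝ → ℝ} {x y U : ℤ → ℝ} {c : ℤ} {δ : ℝ}
    (G : GainAt h x y U c δ) : GainAt h y x U c δ := by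
  obtain ⟨HU, HG⟩ := G
  constructor
  · intro i hi; rw [HU i hi, min_comm]
  · rw [max_comm (y (c-1)), max_comm (y c), max_comm (y (c+1))]
    linarith

lemma gain_symm {h : ℝ → ℝ → ℝ} {x y : ℤ → ℝ} (G : Gain h x y) : Gain h y x := by
  obtain ⟨U, c, δ, hδ, G⟩ := G
  exact ⟨U, c, δ, hδ, gainAt_symm G⟩

lemma key_ineq {h : ℝ → ℝ → ℝ} (h3 : CondH3 h) {x y : ℤ → ℝ}
    (hx : MinimalConfig h x) (hy : MinimalConfig h y)
    (U : ℤ → ℝ) (c : ℤ) (δ : ℝ) (G : GainAt h x y U c δ)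
    (hj : x (c-2) ≤ y (c-2)) (K : ℤ) (hK : c + 2 ≤ K) :
    δ ≤ (h (U (K-1)) (x K) - h (U (K-1)) (U K))
        + (h (max (x (K-1)) (y (K-1))) (y K)
            - h (max (x (K-1)) (y (K-1))) (max (x K) (y K))) := by
  obtain ⟨HU, HG⟩ := G
  set V : ℤ → ℝ := fun i => max (x i) (y i) with hV
  have hjK : c - 2 < K := by omega
  have hjK1 : c - 2 ≤ K - 1 := by omega
  have hK1K : K - 1 ≤ K := by omega
  have splitU : ∀ (z : ℤ → ℝ), (∑ i ∈ Finset.Ico (c-2) K, h (z i) (z (i+1)))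
      = (∑ i ∈ Finset.Ico (c-2) (K-1), h (z i) (z (i+1))) + h (z (K-1)) (z K) := by
    intro z
    rw [← sum_Ico_consec (fun i => h (z i) (z (i+1))) hjK1 hK1K]
    congr 1
    rw [show Finset.Ico (K-1) K = {K-1} by
          ext a; simp only [Finset.mem_Ico, Finset.mem_singleton]; omega,
        Finset.sum_singleton, show K - 1 + 1 = K by ring]
  set X' : ℤ → ℝ := fun i => if i = K then x K else U i with hX'
  set Y' : ℤ → ℝ := fun i => if i = K then y K else V i with hY'
  have eX' : (∑ i ∈ Finset.Ico (c-2) K, h (X' i) (X' (i+1)))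
      = (∑ i ∈ Finset.Ico (c-2) (K-1), h (U i) (U (i+1))) + h (U (K-1)) (x K) := by
    rw [splitU X']
    congr 1
    · apply Finset.sum_congr rfl
      intro i hi
      have hi' := Finset.mem_Ico.mp hi
      rw [hX']
      simp only []
      rw [if_neg (by omega : ¬ i = K), if_neg (by omega : ¬ i + 1 = K)]
    · rw [hX']
      simp only []
      rw [if_neg (by omega : ¬ K - 1 = K)]; simp
  have eY' : (∑ i ∈ Finset.Ico (c-2) K, h (Y' i) (Y' (i+1)))
      = (∑ i ∈ Finset.Ico (c-2) (K-1), h (V i) (V (i+1))) + h (V (K-1)) (y K) := by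
    rw [splitU Y']
    congr 1
    · apply Finset.sum_congr rfl
      intro i hi
      have hi' := Finset.mem_Ico.mp hi
      rw [hY']
      simp only []
      rw [if_neg (by omega : ¬ i = K), if_neg (by omega : ¬ i + 1 = K)]
    · rw [hY']
      simp only []
      rw [if_neg (by omega : ¬ K - 1 = K)]; simp
  have eU := splitU U
  have eV := splitU V
  have mX : (∑ i ∈ Finset.Ico (c-2) K, h (x i) (x (i+1)))
      ≤ ∑ i ∈ Finset.Ico (c-2) K, h (X' i) (X' (i+1)) := by
    apply hx (c-2) K hjK X'
    · rw [hX']; simp only []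
      rw [if_neg (by omega : ¬ c - 2 = K), HU (c-2) (by omega)]
      exact min_eq_left hj
    · rw [hX']; simp
  have mY : (∑ i ∈ Finset.Ico (c-2) K, h (y i) (y (i+1)))
      ≤ ∑ i ∈ Finset.Ico (c-2) K, h (Y' i) (Y' (i+1)) := by
    apply hy (c-2) K hjK Y'
    · rw [hY']; simp only []
      rw [if_neg (by omega : ¬ c - 2 = K), hV]
      exact max_eq_right hj
    · rw [hY']; simp
  -- exchange bound on the full sum
  have EXpt : ∀ i, i ≠ c - 1 → i ≠ c →
      h (U i) (U (i+1)) + h (V i) (V (i+1)) ≤ h (x i) (x (i+1)) + h (y i) (y (i+1)) := by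
    intro i hi1 hi2
    rw [HU i hi2, HU (i+1) (by omega), hV]
    exact EX h3 _ _ _ _
  have split3 : ∀ F : ℤ → ℝ, (∑ i ∈ Finset.Ico (c-2) K, F i)
      = ((∑ i ∈ Finset.Ico (c-2) (c-1), F i) + (F (c-1) + F c))
        + ∑ i ∈ Finset.Ico (c+1) K, F i := by
    intro F
    rw [← sum_Ico_consec F (show (c:ℤ)-2 ≤ c+1 by omega) (show c+1 ≤ K by omega),
        ← sum_Ico_consec F (show (c:ℤ)-2 ≤ c-1 by omega) (show (c:ℤ)-1 ≤ c+1 by omega)]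
    congr 2
    rw [show Finset.Ico (c-1) (c+1) = {c-1, c} by
          ext a; simp only [Finset.mem_Ico, Finset.mem_insert, Finset.mem_singleton]; omega,
        Finset.sum_pair (by omega : c - 1 ≠ c)]
  set F : ℤ → ℝ := fun i => h (U i) (U (i+1)) + h (V i) (V (i+1)) with hF
  set Gf : ℤ → ℝ := fun i => h (x i) (x (i+1)) + h (y i) (y (i+1)) with hGf
  have S1 : (∑ i ∈ Finset.Ico (c-2) (c-1), F i) ≤ ∑ i ∈ Finset.Ico (c-2) (c-1), Gf i := by
    apply Finset.sum_le_sum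
    intro i hi
    have hi' := Finset.mem_Ico.mp hi
    exact EXpt i (by omega) (by omega)
  have S3 : (∑ i ∈ Finset.Ico (c+1) K, F i) ≤ ∑ i ∈ Finset.Ico (c+1) K, Gf i := by
    apply Finset.sum_le_sum
    intro i hi
    have hi' := Finset.mem_Ico.mp hi
    exact EXpt i (by omega) (by omega)
  have S2 : F (c-1) + F c ≤ Gf (c-1) + Gf c - δ := by
    rw [hF, hGf]
    simp only []
    rw [show c - 1 + 1 = c by ring]
    rw [hV]
    linarith
  have total : (∑ i ∈ Finset.Ico (c-2) K, F i) ≤ (∑ i ∈ Finset.Ico (c-2) K, Gf i) - δ := by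
    rw [split3 F, split3 Gf]
    linarith
  have hFsum : (∑ i ∈ Finset.Ico (c-2) K, F i)
      = (∑ i ∈ Finset.Ico (c-2) K, h (U i) (U (i+1)))
        + ∑ i ∈ Finset.Ico (c-2) K, h (V i) (V (i+1)) := by
    rw [hF, ← Finset.sum_add_distrib]
  have hGsum : (∑ i ∈ Finset.Ico (c-2) K, Gf i)
      = (∑ i ∈ Finset.Ico (c-2) K, h (x i) (x (i+1)))
        + ∑ i ∈ Finset.Ico (c-2) K, h (y i) (y (i+1)) := by
    rw [hGf, ← Finset.sum_add_distrib]
  linarith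

lemma no_match {h : ℝ → ℝ → ℝ} (h3 : CondH3 h) {x y : ℤ → ℝ}
    (hx : MinimalConfig h x) (hy : MinimalConfig h y)
    (U : ℤ → ℝ) (c : ℤ) (δ : ℝ) (hδ : 0 < δ) (G : GainAt h x y U c δ)
    (hj : x (c-2) ≤ y (c-2)) (K : ℤ) (hK : c + 2 ≤ K) (hsK : x K ≤ y K) : False := by
  have key := key_ineq h3 hx hy U c δ G hj K hK
  rw [G.1 K (by omega), min_eq_left hsK, max_eq_right hsK] at key
  linarith

lemma contra_both_signs {h : ℝ → ℝ → ℝ} (h3 : CondH3 h) {x y : ℤ → ℝ}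
    (hx : MinimalConfig h x) (hy : MinimalConfig h y) (G : Gain h x y)
    (iA : ∀ N : ℤ, ∃ K, N ≤ K ∧ x K ≤ y K) (iB : ∀ N : ℤ, ∃ K, N ≤ K ∧ y K ≤ x K) : False := by
  obtain ⟨U, c, δ, hδ, G⟩ := G
  rcases le_total (x (c-2)) (y (c-2)) with hj | hj
  · obtain ⟨K, hK1, hK2⟩ := iA (c+2)
    exact no_match h3 hx hy U c δ hδ G hj K hK1 hK2
  · obtain ⟨K, hK1, hK2⟩ := iB (c+2)
    exact no_match h3 hy hx U c δ hδ (gainAt_symm G) hj K hK1 hK2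

lemma gain_of_flip {h : ℝ → ℝ → ℝ} (h3 : CondH3 h) {x y : ℤ → ℝ} (c₀ : ℤ)
    (hflip : (y c₀ - x c₀) * (y (c₀+1) - x (c₀+1)) < 0) : Gain h x y := by
  refine ⟨(fun i => min (x i) (y i)), c₀ + 1,
      (h (x c₀) (x (c₀+1)) + h (y c₀) (y (c₀+1)))
        - (h (min (x c₀) (y c₀)) (min (x (c₀+1)) (y (c₀+1)))
            + h (max (x c₀) (y c₀)) (max (x (c₀+1)) (y (c₀+1)))), ?_, fun i _ => rfl, ?_⟩
  · rcases mul_neg_iff.mp hflip with ⟨hpos, hneg⟩ | ⟨hneg, hpos⟩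
    · have h1' : x c₀ < y c₀ := by linarith
      have h2' : y (c₀+1) < x (c₀+1) := by linarith
      rw [min_eq_left h1'.le, min_eq_right h2'.le, max_eq_right h1'.le, max_eq_left h2'.le]
      have := h3 (x c₀) (y c₀) (y (c₀+1)) (x (c₀+1)) h1' h2'
      linarith
    · have h1' : y c₀ < x c₀ := by linarith
      have h2' : x (c₀+1) < y (c₀+1) := by linarith
      rw [min_eq_right h1'.le, min_eq_left h2'.le, max_eq_left h1'.le, max_eq_right h2'.le]
      have := h3 (y c₀) (x c₀) (x (c₀+1)) (y (c₀+1)) h1' h2'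
      linarith
  · rw [show c₀ + 1 - 1 = c₀ by ring]
    have EX2 := EX h3 (x (c₀+1)) (y (c₀+1)) (x (c₀+1+1)) (y (c₀+1+1))
    linarith

lemma gain_touch_aux {h : ℝ → ℝ → ℝ} (h4 : CondH4 h) {x y : ℤ → ℝ}
    (hx : MinimalConfig h x) (hy : MinimalConfig h y) (c₀ : ℤ) (hz : x c₀ = y c₀)
    (hminus : y (c₀-1) < x (c₀-1)) (hplus : x (c₀+1) < y (c₀+1)) : Gain h x y := by
  have Tx := minTriple_of_minimal hx (c₀ - 1)
  rw [show c₀ - 1 + 1 = c₀ by ring, show c₀ - 1 + 2 = c₀ + 1 by ring] at Tx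
  -- mixed triple is not minimal
  have hmix : ¬ MinTriple h (y (c₀-1)) (x c₀) (x (c₀+1)) := by
    intro hM
    have := h4 (y (c₀-1)) (x c₀) (x (c₀+1)) (x (c₀-1)) (x (c₀+1)) hM Tx
        (Or.inl (ne_of_lt hminus))
    rw [sub_self, mul_zero] at this
    exact lt_irrefl _ this
  rw [MinTriple] at hmix
  push_neg at hmix
  obtain ⟨m, hm⟩ := hmix
  refine ⟨Function.update (fun i => min (x i) (y i)) c₀ m, c₀,
      (h (y (c₀-1)) (x c₀) + h (x c₀) (x (c₀+1))) - (h (y (c₀-1)) m + h m (x (c₀+1))),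
      by linarith, fun i hi => Function.update_of_ne hi _ _, ?_⟩
  rw [Function.update_self,
      Function.update_of_ne (by omega : c₀ - 1 ≠ c₀),
      Function.update_of_ne (by omega : c₀ + 1 ≠ c₀)]
  rw [min_eq_right hminus.le, min_eq_left hplus.le,
      max_eq_left hminus.le, max_eq_right hplus.le, ← hz,
      max_self]
  linarith

lemma gain_of_touch {h : ℝ → ℝ → ℝ} (h4 : CondH4 h) {x y : ℤ → ℝ}
    (hx : MinimalConfig h x) (hy : MinimalConfig h y) (c₀ : ℤ)
    (hz : x c₀ = y c₀) (hne : x (c₀+1) ≠ y (c₀+1)) : Gain h x y := by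
  have Tx := minTriple_of_minimal hx (c₀ - 1)
  have Ty := minTriple_of_minimal hy (c₀ - 1)
  rw [show c₀ - 1 + 1 = c₀ by ring, show c₀ - 1 + 2 = c₀ + 1 by ring] at Tx Ty
  rw [← hz] at Ty
  have cross := h4 (x (c₀-1)) (x c₀) (x (c₀+1)) (y (c₀-1)) (y (c₀+1)) Tx Ty (Or.inr hne)
  rcases mul_neg_iff.mp cross with ⟨hpos, hneg⟩ | ⟨hneg, hpos⟩
  · exact gain_touch_aux h4 hx hy c₀ hz (by linarith) (by linarith)
  · exact gain_symm (gain_touch_aux h4 hy hx c₀ hz.symm (by linarith) (by linarith))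

lemma walk {f : ℤ → ℝ} (hne : ∀ i, f i ≠ 0) {a b : ℤ} (ha : f a < 0) (hb : 0 < f b) :
    ∃ c, f c * f (c+1) < 0 := by
  have main : ∀ n : ℕ, ∀ (g : ℤ → ℝ), (∀ i, g i ≠ 0) → ∀ a : ℤ, g a < 0 → 0 < g (a + n) →
      ∃ c, g c * g (c+1) < 0 := by
    intro n
    induction n with
    | zero =>
      intro g hg a h1 h2
      simp only [Nat.cast_zero, add_zero] at h2
      linarith
    | succ k ih =>
      intro g hg a h1 h2
      rcases lt_trichotomy (g (a+1)) 0 with hneg | hzero | hpos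
      · refine ih g hg (a+1) hneg ?_
        rw [show a + 1 + (k:ℤ) = a + ((k+1:ℕ):ℤ) by push_cast; ring]
        exact h2
      · exact absurd hzero (hg (a+1))
      · exact ⟨a, mul_neg_of_neg_of_pos h1 hpos⟩
  rcases le_total a b with hab | hab
  · refine main (b - a).toNat f hne a ha ?_
    rw [show a + ((b-a).toNat : ℤ) = b by omega]
    exact hb
  · have := main (a - b).toNat (fun i => -f i) (fun i => neg_ne_zero.mpr (hne i)) b
        (by linarith) ?_
    · obtain ⟨c, hc⟩ := this
      rw [neg_mul_neg] at hc
      exact ⟨c, hc⟩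
    · rw [show b + ((a-b).toNat : ℤ) = a by omega]
      linarith

lemma frac_mem (a : ℝ) : a - (⌊a⌋ : ℝ) ∈ Set.Icc (0:ℝ) 1 :=
  ⟨by linarith [Int.floor_le a], by linarith [Int.lt_floor_add_one a]⟩

lemma h_bddBelow {h : ℝ → ℝ → ℝ} (hcont : Continuous (Function.uncurry h))
    (h1 : CondH1 h) (h2 : CondH2 h) : ∃ m₀ : ℝ, ∀ a b : ℝ, m₀ ≤ h a b := by
  obtain ⟨R₀, hR₀⟩ := h2 0
  set T : Set (ℝ × ℝ) := Set.Icc (0:ℝ) 1 ×ˢ Set.Icc (-(|R₀|+1)) (|R₀|+2) with hT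
  have hTc : IsCompact T := (isCompact_Icc).prod isCompact_Icc
  have hTne : T.Nonempty := ⟨(0, 0), ⟨Set.mem_Icc.mpr ⟨le_refl 0, zero_le_one⟩,
    Set.mem_Icc.mpr ⟨by show -(|R₀|+1) ≤ (0:ℝ); nlinarith [abs_nonneg R₀],
      by show (0:ℝ) ≤ |R₀|+2; nlinarith [abs_nonneg R₀]⟩⟩⟩
  obtain ⟨z, hz, hmin⟩ := hTc.exists_isMinOn hTne hcont.continuousOn
  refine ⟨min (Function.uncurry h z) 0, fun a b => ?_⟩
  rcases le_or_gt R₀ |b - a| with hbig | hsmall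
  · have := hR₀ a (b - a) hbig
    rw [show a + (b - a) = b by ring] at this
    exact le_trans (min_le_right _ _) this
  · set n : ℤ := ⌊a⌋ with hn
    have key : h (a - n) (b - n) = h a b := by
      have := hshift h1 n (a - n) (b - n)
      rw [show a - (n:ℝ) + n = a by ring, show b - (n:ℝ) + n = b by ring] at this
      exact this.symm
    have hmem : ((a - (n:ℝ)), (b - (n:ℝ))) ∈ T := by
      constructor
      · exact frac_mem a
      · have h1' := frac_mem a
        simp only [Set.mem_Icc] at h1' ⊢
        have : |b - a| < |R₀| + 1 := lt_of_lt_of_le hsmall (by linarith [le_abs_self R₀])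
        rw [abs_lt] at this
        constructor <;> [linarith [h1'.1]; linarith [h1'.2]]
    have hge : Function.uncurry h z ≤ h (a - (n:ℝ)) (b - (n:ℝ)) := hmin hmem
    rw [key] at hge
    exact le_trans (min_le_left _ _) hge

lemma h_strip_bdd {h : ℝ → ℝ → ℝ} (hcont : Continuous (Function.uncurry h))
    (h1 : CondH1 h) (A : ℝ) : ∃ SA : ℝ, ∀ a ξ : ℝ, |ξ| ≤ A → h a (a + ξ) ≤ SA := by
  set T : Set (ℝ × ℝ) := Set.Icc (0:ℝ) 1 ×ˢ Set.Icc (-(|A|+1)) (|A|+2) with hT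
  have hTc : IsCompact T := (isCompact_Icc).prod isCompact_Icc
  have hTne : T.Nonempty := ⟨(0, 0), ⟨Set.mem_Icc.mpr ⟨le_refl 0, zero_le_one⟩,
    Set.mem_Icc.mpr ⟨by show -(|A|+1) ≤ (0:ℝ); nlinarith [abs_nonneg A],
      by show (0:ℝ) ≤ |A|+2; nlinarith [abs_nonneg A]⟩⟩⟩
  obtain ⟨z, hz, hmax⟩ := hTc.exists_isMaxOn hTne hcont.continuousOn
  refine ⟨Function.uncurry h z, fun a ξ hξ => ?_⟩
  set n : ℤ := ⌊a⌋ with hn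
  have key : h (a - n) (a + ξ - n) = h a (a + ξ) := by
    have := hshift h1 n (a - n) (a + ξ - n)
    rw [show a - (n:ℝ) + n = a by ring, show a + ξ - (n:ℝ) + n = a + ξ by ring] at this
    exact this.symm
  have hmem : ((a - (n:ℝ)), (a + ξ - (n:ℝ))) ∈ T := by
    constructor
    · exact frac_mem a
    · have h1' := frac_mem a
      simp only [Set.mem_Icc] at h1' ⊢
      have hξ' : -( |A| ) ≤ ξ ∧ ξ ≤ |A| := abs_le.mp (le_trans hξ (le_abs_self A))
      constructor <;> [linarith [h1'.1, hξ'.1]; linarith [h1'.2, hξ'.2]]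
  have hle : h (a - (n:ℝ)) (a + ξ - (n:ℝ)) ≤ Function.uncurry h z := hmax hmem
  rw [key] at hle
  exact hle

lemma rot_bound {x : ℤ → ℝ} {ρ : ℝ}
    (hrot : Tendsto (fun n : ℕ => x n / n) atTop (𝓝 ρ)) :
    ∀ ε : ℝ, 0 < ε → ∃ N₀ : ℤ, 1 ≤ N₀ ∧ ∀ n : ℤ, N₀ ≤ n → |x n - ρ * n| ≤ ε * n := by
  intro ε hε
  obtain ⟨N, hN⟩ := (Metric.tendsto_atTop.mp hrot) ε hε
  refine ⟨max (N : ℤ) 1, le_max_right _ _, fun n hn => ?_⟩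
  have hn1 : (1:ℤ) ≤ n := le_trans (le_max_right _ _) hn
  have hnN : (N : ℤ) ≤ n := le_trans (le_max_left _ _) hn
  set m : ℕ := n.toNat with hm
  have hmn : (m : ℤ) = n := Int.toNat_of_nonneg (by omega)
  have hmN : N ≤ m := by omega
  have hdist := hN m hmN
  rw [Real.dist_eq] at hdist
  have hcast : ((m:ℕ):ℝ) = ((n:ℤ):ℝ) := by exact_mod_cast congrArg (fun z : ℤ => (z:ℝ)) hmn
  rw [hmn, hcast] at hdist
  have hnR : (0:ℝ) < (n:ℝ) := by exact_mod_cast hn1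
  have heq : x n - ρ * n = (x n / n - ρ) * n := by field_simp
  rw [heq, abs_mul, abs_of_pos hnR]
  exact mul_le_mul_of_nonneg_right hdist.le hnR.le

lemma card_Ico_real {a b : ℤ} (hab : a ≤ b) : (((Finset.Ico a b).card : ℕ) : ℝ) = (b:ℝ) - a := by
  rw [Int.card_Ico]
  have h1 : ((b-a).toNat : ℤ) = b - a := Int.toNat_of_nonneg (by omega)
  calc (((b-a).toNat : ℕ) : ℝ) = (((b-a).toNat : ℤ) : ℝ) := by push_cast; ring
    _ = ((b - a : ℤ) : ℝ) := by rw [h1]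
    _ = (b:ℝ) - a := by push_cast; ring

lemma action_bound {h : ℝ → ℝ → ℝ} {x : ℤ → ℝ} (hx : MinimalConfig h x) {ρ SA : ℝ}
    (hSA : ∀ a ξ : ℝ, |ξ| ≤ |ρ| + 2 → h a (a + ξ) ≤ SA)
    (hrot : Tendsto (fun n : ℕ => x n / n) atTop (𝓝 ρ)) :
    ∃ N₁ : ℤ, 1 ≤ N₁ ∧ ∀ N : ℤ, N₁ ≤ N →
      (∑ i ∈ Finset.Ico (0:ℤ) N, h (x i) (x (i+1))) ≤ N * SA := by
  obtain ⟨N₀, hN₀1, hN₀⟩ := rot_bound hrot 1 one_pos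
  obtain ⟨Nx, hNx⟩ := exists_int_ge |x 0|
  refine ⟨max N₀ (max Nx 1), le_trans hN₀1 (le_max_left _ _), fun N hN => ?_⟩
  have h1N : (1:ℤ) ≤ N := le_trans (le_trans (le_max_right Nx 1) (le_max_right N₀ _)) hN
  have hNR : (0:ℝ) < N := by exact_mod_cast h1N
  set ξ : ℝ := (x N - x 0) / N with hξ
  set w : ℤ → ℝ := fun l => x 0 + l * ξ with hw
  have hw0 : w 0 = x 0 := by simp [hw]
  have hwN : w N = x N := by
    simp only [hw, hξ]
    field_simp
    ring
  have hstep : ∀ l : ℤ, w (l+1) = w l + ξ := by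
    intro l; simp only [hw]; push_cast; ring
  have hξbd : |ξ| ≤ |ρ| + 2 := by
    have hrotN := hN₀ N (le_trans (le_max_left _ _) hN)
    have hNx_le : (Nx:ℝ) ≤ N := by
      exact_mod_cast le_trans (le_trans (le_max_left Nx 1) (le_max_right N₀ _)) hN
    have t1 : |x N - x 0| ≤ |x N - ρ*N| + (|ρ*N| + |x 0|) := by
      have e : x N - x 0 = (x N - ρ*N) + (ρ*N + (- x 0)) := by ring
      rw [e]
      refine (abs_add_le _ _).trans (add_le_add_right ?_ _)
      refine (abs_add_le _ _).trans ?_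
      rw [abs_neg]
    have t2 : |ρ*(N:ℝ)| = |ρ| * (N:ℝ) := by rw [abs_mul, abs_of_pos hNR]
    rw [hξ, abs_div, abs_of_pos hNR, div_le_iff₀ hNR]
    have hb : |x 0| ≤ (N:ℝ) := le_trans hNx hNx_le
    rw [one_mul] at hrotN
    rw [t2] at t1
    nlinarith [abs_nonneg ρ]
  have hmin := hx 0 N (by omega) w hw0 hwN
  have hsum : (∑ i ∈ Finset.Ico (0:ℤ) N, h (w i) (w (i+1))) ≤ N * SA := by
    have hterm : ∀ i ∈ Finset.Ico (0:ℤ) N, h (w i) (w (i+1)) ≤ SA := by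
      intro i _
      rw [hstep i]
      exact hSA (w i) ξ hξbd
    calc (∑ i ∈ Finset.Ico (0:ℤ) N, h (w i) (w (i+1)))
        ≤ (Finset.Ico (0:ℤ) N).card • SA := Finset.sum_le_card_nsmul _ _ _ hterm
      _ = N * SA := by
          rw [nsmul_eq_mul, card_Ico_real (by omega : (0:ℤ) ≤ N)]
          ring
  linarith

lemma step_count {h : ℝ → ℝ → ℝ} {x : ℤ → ℝ} (h2 : CondH2 h)
    {m₀ SA : ℝ} (hm₀ : ∀ a b, m₀ ≤ h a b) (hmS : m₀ ≤ SA)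
    {N₁ : ℤ} (hN₁1 : 1 ≤ N₁)
    (hact : ∀ N : ℤ, N₁ ≤ N → (∑ i ∈ Finset.Ico (0:ℤ) N, h (x i) (x (i+1))) ≤ N * SA) :
    ∃ C : ℝ, 1 ≤ C ∧ ∀ N : ℤ, N₁ ≤ N →
      ((((Finset.Ico (0:ℤ) N).filter (fun l => C < |x (l+1) - x l|)).card : ℕ) : ℝ)
        ≤ (N:ℝ)/8 := by
  obtain ⟨R, hR⟩ := h2 (m₀ + 8*(SA - m₀ + 1))
  refine ⟨max |R| 1, le_max_right _ _, fun N hN => ?_⟩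
  set C := max |R| 1 with hC
  set B := (Finset.Ico (0:ℤ) N).filter (fun l => C < |x (l+1) - x l|) with hB
  set Bc := (Finset.Ico (0:ℤ) N).filter (fun l => ¬ (C < |x (l+1) - x l|)) with hBc
  have hNpos : (0:ℤ) < N := by omega
  have cardsplit : B.card + Bc.card = (Finset.Ico (0:ℤ) N).card :=
    Finset.card_filter_add_card_filter_not _
  have cardIco : (((Finset.Ico (0:ℤ) N).card : ℕ) : ℝ) = (N:ℝ) := by
    rw [card_Ico_real (by omega : (0:ℤ) ≤ N)]; ring
  have hsplit := Finset.sum_filter_add_sum_filter_not (Finset.Ico (0:ℤ) N)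
      (fun l => C < |x (l+1) - x l|) (fun l => h (x l) (x (l+1)))
  have hBsum : (B.card : ℝ) * (m₀ + 8*(SA - m₀ + 1)) ≤ ∑ l ∈ B, h (x l) (x (l+1)) := by
    have hterm : ∀ l ∈ B, m₀ + 8*(SA - m₀ + 1) ≤ h (x l) (x (l+1)) := by
      intro l hl
      have hl' := (Finset.mem_filter.mp hl).2
      have hRle : R ≤ |x (l+1) - x l| :=
        le_trans (le_trans (le_abs_self R) (le_max_left _ _)) hl'.le
      have := hR (x l) (x (l+1) - x l) hRle
      rwa [show x l + (x (l+1) - x l) = x (l+1) by ring] at this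
    calc (B.card:ℝ) * (m₀ + 8*(SA - m₀ + 1)) = B.card • (m₀ + 8*(SA - m₀ + 1)) := by
          rw [nsmul_eq_mul]
      _ ≤ _ := Finset.card_nsmul_le_sum _ _ _ hterm
  have hBcsum : (Bc.card : ℝ) * m₀ ≤ ∑ l ∈ Bc, h (x l) (x (l+1)) := by
    calc (Bc.card:ℝ) * m₀ = Bc.card • m₀ := by rw [nsmul_eq_mul]
      _ ≤ _ := Finset.card_nsmul_le_sum _ _ _ (fun l _ => hm₀ _ _)
  have htot := hact N hN
  have hcards : (B.card : ℝ) + (Bc.card : ℝ) = (N:ℝ) := by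
    rw [← cardIco]; exact_mod_cast congrArg (fun n : ℕ => (n:ℝ)) cardsplit
  have hBnn : (0:ℝ) ≤ (B.card : ℝ) := Nat.cast_nonneg _
  have hs : (0:ℝ) ≤ SA - m₀ := by linarith
  have hNR : (0:ℝ) < N := by exact_mod_cast hNpos
  rw [← hB, ← hBc] at hsplit
  have hBc_eq : (Bc.card:ℝ) = (N:ℝ) - B.card := by linarith
  have e : (Bc.card:ℝ) * m₀ = (N:ℝ)*m₀ - (B.card:ℝ)*m₀ := by rw [hBc_eq]; ring
  have key : 8*(B.card:ℝ)*(SA - m₀ + 1) ≤ (N:ℝ)*(SA - m₀) := by linarith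
  nlinarith [key, hs, hNR, hBnn]

lemma dsum_small {x : ℤ → ℝ} {p q : ℤ} (hq : 0 < q) {ρ : ℝ} (hρ : ρ = (p:ℝ)/(q:ℝ))
    (hrot : Tendsto (fun n : ℕ => x n / n) atTop (𝓝 ρ)) :
    ∀ ε : ℝ, 0 < ε → ∃ N₄ : ℤ, 1 ≤ N₄ ∧ ∀ N : ℤ, N₄ ≤ N →
      |∑ K ∈ Finset.Ico (0:ℤ) N, (x (K+q) - x K - p)| ≤ ε * N := by
  intro ε hε
  have hqR : (0:ℝ) < q := by exact_mod_cast hq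
  obtain ⟨N₀, hN₀1, hN₀⟩ := rot_bound hrot (ε/(4*q)) (by positivity)
  set CX : ℝ := (q:ℝ)^2 * |ρ| + |∑ t ∈ Finset.Ico (0:ℤ) q, x t| with hCX
  obtain ⟨N₅, hN₅⟩ := exists_int_ge (2*CX/ε)
  refine ⟨max (max N₀ q) (max N₅ 1),
      le_trans (le_max_right N₅ 1) (le_max_right _ _), fun N hN => ?_⟩
  have hNN₀ : N₀ ≤ N := le_trans (le_trans (le_max_left _ _) (le_max_left _ _)) hN
  have hNq : q ≤ N := le_trans (le_trans (le_max_right _ _) (le_max_left _ _)) hN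
  have hN1 : (1:ℤ) ≤ N := le_trans hq hNq
  have hNR : (0:ℝ) < N := by exact_mod_cast hN1
  have hN₅N : (N₅:ℝ) ≤ N := by
    exact_mod_cast le_trans (le_trans (le_max_left _ _) (le_max_right _ _)) hN
  have e1 : (∑ K ∈ Finset.Ico (0:ℤ) N, x (K+q)) = ∑ t ∈ Finset.Ico q (N+q), x t := by
    have := sum_shift x 0 N q
    rw [zero_add] at this
    exact this.symm
  have e2 := sum_Ico_consec x hNq (by omega : N ≤ N + q)
  have e3 := sum_Ico_consec x (by omega : (0:ℤ) ≤ q) hNq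
  have e4 : (∑ _K ∈ Finset.Ico (0:ℤ) N, ((p:ℤ):ℝ)) = (N:ℝ) * p := by
    rw [Finset.sum_const, nsmul_eq_mul, card_Ico_real (by omega : (0:ℤ) ≤ N)]; ring
  have hid : (∑ K ∈ Finset.Ico (0:ℤ) N, (x (K+q) - x K - p))
      = ((∑ t ∈ Finset.Ico N (N+q), x t) - (N:ℝ)*p) - ∑ t ∈ Finset.Ico (0:ℤ) q, x t := by
    have ee : (∑ K ∈ Finset.Ico (0:ℤ) N, (x (K+q) - x K - p))
        = ((∑ K ∈ Finset.Ico (0:ℤ) N, x (K+q)) - (∑ K ∈ Finset.Ico (0:ℤ) N, x K))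
          - ∑ _K ∈ Finset.Ico (0:ℤ) N, ((p:ℤ):ℝ) := by
      rw [← Finset.sum_sub_distrib, ← Finset.sum_sub_distrib]
    rw [ee, e1, e4]
    linarith [e2, e3]
  have hρq : ρ * (q:ℝ) = (p:ℝ) := by rw [hρ]; field_simp
  have key : (∑ t ∈ Finset.Ico N (N+q), x t) - (N:ℝ)*p
      = ∑ t ∈ Finset.Ico N (N+q), (x t - ρ*(N:ℝ)) := by
    rw [Finset.sum_sub_distrib, Finset.sum_const, nsmul_eq_mul,
        card_Ico_real (by omega : N ≤ N + q)]
    have e5 : ((N:ℝ) + q - N) * (ρ * (N:ℝ)) = (p:ℝ) * N := by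
      rw [show ((N:ℝ) + q - N) = (q:ℝ) by push_cast; ring, ← hρq]; ring
    push_cast at e5 ⊢
    linarith [e5]
  have hterm : ∀ t ∈ Finset.Ico N (N+q), |x t - ρ*(N:ℝ)|
      ≤ (ε/(4*q))*((N:ℝ)+q) + (q:ℝ)*|ρ| := by
    intro t ht
    have ht' := Finset.mem_Ico.mp ht
    have h1 : |x t - ρ*t| ≤ (ε/(4*q))*t := hN₀ t (by omega)
    have htR : (t:ℝ) ≤ (N:ℝ)+q := by exact_mod_cast (by omega : t ≤ N + q)
    have htN1 : (0:ℝ) ≤ (t:ℝ) - N := by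
      have : (N:ℝ) ≤ t := by exact_mod_cast ht'.1
      linarith
    have htN2 : (t:ℝ) - N ≤ q := by
      have : (t:ℝ) ≤ (N:ℝ) + q := by exact_mod_cast (by omega : t ≤ N + q)
      linarith
    have h2 : |ρ*(t:ℝ) - ρ*(N:ℝ)| ≤ (q:ℝ)*|ρ| := by
      rw [show ρ*(t:ℝ) - ρ*(N:ℝ) = ρ*((t:ℝ) - N) by ring, abs_mul]
      have habs : |(t:ℝ) - N| ≤ q := abs_le.mpr ⟨by linarith, htN2⟩
      calc |ρ| * |(t:ℝ)-N| ≤ |ρ| * q := mul_le_mul_of_nonneg_left habs (abs_nonneg ρ)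
        _ = (q:ℝ)*|ρ| := by ring
    have tri : |x t - ρ*(N:ℝ)| ≤ |x t - ρ*t| + |ρ*(t:ℝ) - ρ*(N:ℝ)| := by
      rw [show x t - ρ*(N:ℝ) = (x t - ρ*t) + (ρ*(t:ℝ) - ρ*N) by ring]
      exact abs_add_le _ _
    have h1' : (ε/(4*q))*(t:ℝ) ≤ (ε/(4*q))*((N:ℝ)+q) :=
      mul_le_mul_of_nonneg_left htR (by positivity)
    linarith
  have hsum1 : |∑ t ∈ Finset.Ico N (N+q), (x t - ρ*(N:ℝ))|
      ≤ (q:ℝ)*((ε/(4*q))*((N:ℝ)+q) + (q:ℝ)*|ρ|) := by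
    refine (Finset.abs_sum_le_sum_abs _ _).trans ?_
    calc (∑ t ∈ Finset.Ico N (N+q), |x t - ρ*(N:ℝ)|)
        ≤ (Finset.Ico N (N+q)).card • ((ε/(4*q))*((N:ℝ)+q) + (q:ℝ)*|ρ|) :=
          Finset.sum_le_card_nsmul _ _ _ hterm
      _ = (q:ℝ)*((ε/(4*q))*((N:ℝ)+q) + (q:ℝ)*|ρ|) := by
          rw [nsmul_eq_mul, card_Ico_real (by omega : N ≤ N + q)]
          push_cast; ring
  have htri2 : |∑ K ∈ Finset.Ico (0:ℤ) N, (x (K+q) - x K - p)|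
      ≤ |(∑ t ∈ Finset.Ico N (N+q), x t) - (N:ℝ)*p| + |∑ t ∈ Finset.Ico (0:ℤ) q, x t| := by
    rw [hid, sub_eq_add_neg]
    refine (abs_add_le _ _).trans (le_of_eq ?_)
    rw [abs_neg]
  rw [key] at htri2
  have e6 : (q:ℝ)*(ε/(4*q)) = ε/4 := by field_simp
  have e7 : CX ≤ ε*N/2 := by
    have h25 : 2*CX/ε ≤ (N:ℝ) := le_trans hN₅ hN₅N
    rw [div_le_iff₀ hε] at h25
    linarith
  have hqN : (q:ℝ) ≤ N := by exact_mod_cast hNq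
  have e8 : (ε/4)*((N:ℝ)+q) ≤ (ε/4)*(2*N) :=
    mul_le_mul_of_nonneg_left (by linarith) (by positivity)
  have expand : (q:ℝ)*((ε/(4*q))*((N:ℝ)+q) + (q:ℝ)*|ρ|)
      = (ε/4)*((N:ℝ)+q) + (q:ℝ)^2*|ρ| := by
    field_simp
  rw [expand] at hsum1
  rw [hCX] at e7
  linarith

lemma good_K_exists {x : ℤ → ℝ} {p q : ℤ} (hq : 0 < q) {C : ℝ}
    {N₁ : ℤ} (hN₁1 : 1 ≤ N₁)
    (stepctl : ∀ N : ℤ, N₁ ≤ N →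
      ((((Finset.Ico (0:ℤ) N).filter (fun l => C < |x (l+1) - x l|)).card : ℕ) : ℝ) ≤ (N:ℝ)/8)
    (dctl : ∀ ε : ℝ, 0 < ε → ∃ N₄ : ℤ, 1 ≤ N₄ ∧ ∀ N : ℤ, N₄ ≤ N →
      |∑ K ∈ Finset.Ico (0:ℤ) N, (x (K+q) - x K - p)| ≤ ε * N)
    (B₀ : ℤ)
    (tail : (∀ K : ℤ, B₀ ≤ K → 0 ≤ x (K+q) - x K - p) ∨
            (∀ K : ℤ, B₀ ≤ K → x (K+q) - x K - p ≤ 0))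
    (ε : ℝ) (hε : 0 < ε) (L : ℤ) :
    ∃ K : ℤ, L ≤ K ∧ |x K - x (K-1)| ≤ C ∧ |x (K+q) - x (K+q-1)| ≤ C ∧
      |x (K+q) - x K - p| ≤ ε := by
  obtain ⟨N₄, hN₄1, hN₄⟩ := dctl (ε/32) (by positivity)
  set B₁ : ℤ := max (max B₀ L) 1 with hB₁
  set CB : ℝ := |∑ K ∈ Finset.Ico (0:ℤ) B₁, (x (K+q) - x K - (p:ℝ))| with hCB
  obtain ⟨N₆, hN₆⟩ := exists_int_ge (16*CB/ε)
  set N : ℤ := max (max N₁ N₄) (max (max (8*B₁) (2*q)) (max N₆ (8*B₁ + 8*q + 64))) with hNdef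
  have hNN₁ : N₁ ≤ N := by omega
  have hNN₄ : N₄ ≤ N := by omega
  have hN8B : 8*B₁ ≤ N := by omega
  have hN2q : 2*q ≤ N := by omega
  have hNN₆ : N₆ ≤ N := by omega
  have hB₁1 : 1 ≤ B₁ := by omega
  have hB₁N : B₁ ≤ N := by omega
  have hNR : (0:ℝ) < N := by exact_mod_cast (by omega : (0:ℤ) < N)
  by_contra hno
  set bad1 := (Finset.Ico B₁ N).filter (fun K => ε < |x (K+q) - x K - (p:ℝ)|) with hbad1
  set bad2 := (Finset.Ico B₁ N).filter (fun K => C < |x K - x (K-1)|) with hbad2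
  set bad3 := (Finset.Ico B₁ N).filter (fun K => C < |x (K+q) - x (K+q-1)|) with hbad3
  have hsub : Finset.Ico B₁ N ⊆ bad1 ∪ (bad2 ∪ bad3) := by
    intro K hK
    by_contra hKn
    rw [Finset.mem_union, Finset.mem_union] at hKn
    push_neg at hKn
    obtain ⟨hK1, hK2, hK3⟩ := hKn
    rw [hbad1, Finset.mem_filter] at hK1
    rw [hbad2, Finset.mem_filter] at hK2
    rw [hbad3, Finset.mem_filter] at hK3
    have hKmem := Finset.mem_Ico.mp hK
    refine hno ⟨K, by omega, ?_, ?_, ?_⟩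
    · exact not_lt.mp (fun hc => hK2 ⟨hK, hc⟩)
    · exact not_lt.mp (fun hc => hK3 ⟨hK, hc⟩)
    · exact not_lt.mp (fun hc => hK1 ⟨hK, hc⟩)
  -- bad1 bound
  have hb1 : (bad1.card : ℝ) * ε ≤ ∑ K ∈ bad1, |x (K+q) - x K - (p:ℝ)| := by
    calc (bad1.card : ℝ) * ε = bad1.card • ε := by rw [nsmul_eq_mul]
      _ ≤ _ := Finset.card_nsmul_le_sum _ _ _
          (fun K hK => ((Finset.mem_filter.mp hK).2).le)
  have hb2 : (∑ K ∈ bad1, |x (K+q) - x K - (p:ℝ)|)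
      ≤ ∑ K ∈ Finset.Ico B₁ N, |x (K+q) - x K - (p:ℝ)| :=
    Finset.sum_le_sum_of_subset_of_nonneg (Finset.filter_subset _ _)
      (fun i _ _ => abs_nonneg _)
  have hb3 : (∑ K ∈ Finset.Ico B₁ N, |x (K+q) - x K - (p:ℝ)|)
      ≤ |∑ K ∈ Finset.Ico B₁ N, (x (K+q) - x K - (p:ℝ))| := by
    rcases tail with tl | tl
    · rw [Finset.sum_congr rfl (fun K hK => abs_of_nonneg
        (tl K (by have := (Finset.mem_Ico.mp hK).1; omega)))]
      exact le_abs_self _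
    · rw [Finset.sum_congr rfl (fun K hK => abs_of_nonpos
        (tl K (by have := (Finset.mem_Ico.mp hK).1; omega))), Finset.sum_neg_distrib]
      exact neg_le_abs _
  have hsc := sum_Ico_consec (fun K => x (K+q) - x K - (p:ℝ)) (by omega : (0:ℤ) ≤ B₁) hB₁N
  have hb4 : |∑ K ∈ Finset.Ico B₁ N, (x (K+q) - x K - (p:ℝ))|
      ≤ |∑ K ∈ Finset.Ico (0:ℤ) N, (x (K+q) - x K - (p:ℝ))| + CB := by
    have e : (∑ K ∈ Finset.Ico B₁ N, (x (K+q) - x K - (p:ℝ)))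
        = (∑ K ∈ Finset.Ico (0:ℤ) N, (x (K+q) - x K - (p:ℝ)))
          - ∑ K ∈ Finset.Ico (0:ℤ) B₁, (x (K+q) - x K - (p:ℝ)) := by
      linarith [hsc]
    rw [e, sub_eq_add_neg]
    refine (abs_add_le _ _).trans ?_
    rw [abs_neg]
  have hb5 := hN₄ N hNN₄
  have r1 : (bad1.card : ℝ) ≤ (N:ℝ)/32 + CB/ε := by
    have h1 : (bad1.card : ℝ) * ε ≤ (ε/32)*N + CB := by linarith
    have h2 : (bad1.card : ℝ) ≤ ((ε/32)*N + CB)/ε := by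
      rw [le_div_iff₀ hε]; linarith
    have h3 : ((ε/32)*(N:ℝ) + CB)/ε = (N:ℝ)/32 + CB/ε := by field_simp
    linarith
  -- bad2, bad3 bounds
  have r2 : (bad2.card : ℝ) ≤ (N:ℝ)/8 := by
    have hinj : bad2.card
        ≤ ((Finset.Ico (0:ℤ) N).filter (fun l => C < |x (l+1) - x l|)).card := by
      apply Finset.card_le_card_of_injOn (fun K => K - 1)
      · intro K hK
        rw [hbad2, Finset.mem_coe, Finset.mem_filter] at hK
        have hKm := Finset.mem_Ico.mp hK.1
        rw [Finset.mem_coe, Finset.mem_filter, Finset.mem_Ico]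
        constructor
        · dsimp only; omega
        · rw [show K - 1 + 1 = K by ring]; exact hK.2
      · intro a _ b _ hab; dsimp at hab; omega
    calc (bad2.card : ℝ) ≤ _ := by exact_mod_cast hinj
      _ ≤ (N:ℝ)/8 := stepctl N hNN₁
  have r3 : (bad3.card : ℝ) ≤ ((N:ℝ)+q)/8 := by
    have hinj : bad3.card
        ≤ ((Finset.Ico (0:ℤ) (N+q)).filter (fun l => C < |x (l+1) - x l|)).card := by
      apply Finset.card_le_card_of_injOn (fun K => K + q - 1)
      · intro K hK
        rw [hbad3, Finset.mem_coe, Finset.mem_filter] at hK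
        have hKm := Finset.mem_Ico.mp hK.1
        rw [Finset.mem_coe, Finset.mem_filter, Finset.mem_Ico]
        constructor
        · dsimp only; omega
        · rw [show K + q - 1 + 1 = K + q by ring]; exact hK.2
      · intro a _ b _ hab; dsimp at hab; omega
    have hstep' := stepctl (N+q) (by omega)
    have hcast : (((N:ℤ)+q : ℤ):ℝ) = (N:ℝ) + q := by push_cast; ring
    calc (bad3.card : ℝ) ≤ _ := by exact_mod_cast hinj
      _ ≤ (((N:ℤ)+q:ℤ):ℝ)/8 := hstep'
      _ = ((N:ℝ)+q)/8 := by rw [hcast]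
  -- total count
  have hcard : ((Finset.Ico B₁ N).card : ℝ) ≤ (bad1.card : ℝ) + (bad2.card : ℝ) + (bad3.card : ℝ) := by
    have h1 : (Finset.Ico B₁ N).card ≤ (bad1 ∪ (bad2 ∪ bad3)).card := Finset.card_le_card hsub
    have h2 : (bad1 ∪ (bad2 ∪ bad3)).card ≤ bad1.card + (bad2 ∪ bad3).card := Finset.card_union_le _ _
    have h3 : (bad2 ∪ bad3).card ≤ bad2.card + bad3.card := Finset.card_union_le _ _
    have h4 : (Finset.Ico B₁ N).card ≤ bad1.card + bad2.card + bad3.card := by omega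
    exact_mod_cast h4
  have hcardIco : ((Finset.Ico B₁ N).card : ℝ) = (N:ℝ) - B₁ := card_Ico_real hB₁N
  have r4 : CB/ε ≤ (N:ℝ)/16 := by
    have h1 : 16*CB/ε ≤ (N:ℝ) := le_trans hN₆ (by exact_mod_cast hNN₆)
    have h2 : CB/ε = (16*CB/ε)/16 := by ring
    linarith
  have r5 : (B₁:ℝ) ≤ (N:ℝ)/8 := by
    have : ((8*B₁ : ℤ):ℝ) ≤ (N:ℝ) := by exact_mod_cast hN8B
    push_cast at this
    linarith
  have r6 : (q:ℝ) ≤ (N:ℝ)/2 := by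
    have : ((2*q : ℤ):ℝ) ≤ (N:ℝ) := by exact_mod_cast hN2q
    push_cast at this
    linarith
  linarith

lemma cost_bound {h : ℝ → ℝ → ℝ} (hcont : Continuous (Function.uncurry h)) (h1 : CondH1 h)
    (D : ℝ) (hD : 0 < D) (δ' : ℝ) (hδ' : 0 < δ') :
    ∃ ε : ℝ, 0 < ε ∧ ε ≤ 1 ∧ ∀ (a b b' : ℝ) (n : ℤ),
      |a - n| ≤ D → |b - n| ≤ D → |b' - n| ≤ D → |b - b'| ≤ ε → h a b - h a b' ≤ δ' := by
  have hQc : IsCompact (Set.Icc (-D) D ×ˢ Set.Icc (-D) D) := isCompact_Icc.prod isCompact_Icc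
  have huc := hQc.uniformContinuousOn_of_continuous hcont.continuousOn
  rw [Metric.uniformContinuousOn_iff_le] at huc
  obtain ⟨ε₀, hε₀, hmod⟩ := huc δ' hδ'
  refine ⟨min ε₀ 1, by positivity, min_le_right _ _, ?_⟩
  intro a b b' n ha hb hb' hbb
  have e1 : h a b = h (a - n) (b - n) := by
    have := hshift h1 n (a - n) (b - n)
    rw [show a - (n:ℝ) + n = a by ring, show b - (n:ℝ) + n = b by ring] at this
    exact this
  have e2 : h a b' = h (a - n) (b' - n) := by
    have := hshift h1 n (a - n) (b' - n)
    rw [show a - (n:ℝ) + n = a by ring, show b' - (n:ℝ) + n = b' by ring] at this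
    exact this
  have hmem1 : ((a - (n:ℝ)), (b - (n:ℝ))) ∈ Set.Icc (-D) D ×ˢ Set.Icc (-D) D :=
    ⟨Set.mem_Icc.mpr (abs_le.mp ha), Set.mem_Icc.mpr (abs_le.mp hb)⟩
  have hmem2 : ((a - (n:ℝ)), (b' - (n:ℝ))) ∈ Set.Icc (-D) D ×ˢ Set.Icc (-D) D :=
    ⟨Set.mem_Icc.mpr (abs_le.mp ha), Set.mem_Icc.mpr (abs_le.mp hb')⟩
  have hdist : dist ((a - (n:ℝ)), (b - (n:ℝ))) ((a - (n:ℝ)), (b' - (n:ℝ))) ≤ ε₀ := by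
    rw [Prod.dist_eq]
    have d1 : dist (a - (n:ℝ)) (a - (n:ℝ)) = 0 := dist_self _
    have d2 : dist (b - (n:ℝ)) (b' - (n:ℝ)) = |b - b'| := by
      rw [Real.dist_eq]; congr 1; ring
    rw [d1, d2]
    have : |b - b'| ≤ ε₀ := le_trans hbb (min_le_left _ _)
    exact max_le (by linarith) this
  have := hmod _ hmem1 _ hmem2 hdist
  rw [Real.dist_eq] at this
  have habs := (abs_le.mp this).2
  simp only [Function.uncurry] at habs
  rw [e1, e2]
  exact habs

lemma gain_exists {h : ℝ → ℝ → ℝ} (h3 : CondH3 h) (h4 : CondH4 h) {x y : ℤ → ℝ}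
    (hx : MinimalConfig h x) (hy : MinimalConfig h y)
    (hne : ∃ i, x i ≠ y i) (ha : ∃ a, y a ≤ x a) (hb : ∃ b, x b ≤ y b) : Gain h x y := by
  by_cases hz : ∃ z, x z = y z
  · obtain ⟨z, hzz⟩ := hz
    by_cases hz1 : x (z+1) = y (z+1)
    · exfalso
      obtain ⟨i, hi⟩ := hne
      exact hi (rigidity h4 hx hy z hzz hz1 i)
    · exact gain_of_touch h4 hx hy z hzz hz1
  · push_neg at hz
    obtain ⟨a, ha'⟩ := ha
    obtain ⟨b, hb'⟩ := hb
    have hfa : y a - x a < 0 := lt_of_le_of_ne (by linarith) (fun hc => hz a (by linarith [hc]))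
    have hfb : 0 < y b - x b := lt_of_le_of_ne (by linarith) (fun hc => hz b (by linarith [hc]))
    have hfne : ∀ i, y i - x i ≠ 0 := fun i hc => hz i (by linarith [hc])
    obtain ⟨c₀, hc₀⟩ := walk hfne hfa hfb
    exact gain_of_flip h3 c₀ hc₀

lemma final_contra {h : ℝ → ℝ → ℝ} (hcont : Continuous (Function.uncurry h))
    (h1 : CondH1 h) (h2 : CondH2 h) (h3 : CondH3 h)
    {x : ℤ → ℝ} (hx : MinimalConfig h x) {p q : ℤ} (hq : 0 < q)
    (hrot : Tendsto (fun n : ℕ => x n / n) atTop (𝓝 ((p:ℝ)/(q:ℝ))))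
    (G : Gain h x (fun i => x (i + q) - p)) (B₀ : ℤ)
    (tail : (∀ K : ℤ, B₀ ≤ K → 0 ≤ x (K+q) - x K - p) ∨
            (∀ K : ℤ, B₀ ≤ K → x (K+q) - x K - p ≤ 0)) : False := by
  set y : ℤ → ℝ := fun i => x (i + q) - p with hydef
  have hy : MinimalConfig h y := minimal_translate h1 hx q p
  obtain ⟨U, c, δ, hδ, GA⟩ := G
  obtain ⟨m₀, hm₀⟩ := h_bddBelow hcont h1 h2
  obtain ⟨SA, hSA⟩ := h_strip_bdd hcont h1 (|(p:ℝ)/(q:ℝ)| + 2)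
  have hmS : m₀ ≤ SA := by
    have ha' := hSA 0 0 (by rw [abs_zero]; positivity)
    have hb' := hm₀ 0 (0+0)
    linarith
  obtain ⟨N₁, hN₁1, hact⟩ := action_bound hx hSA hrot
  obtain ⟨C, hC1, stepctl⟩ := step_count h2 hm₀ hmS hN₁1 hact
  set D : ℝ := C + 5 with hDdef
  obtain ⟨ε, hε, hε1, hmod⟩ := cost_bound hcont h1 D (by linarith) (δ/4) (by linarith)
  obtain ⟨K, hKL, hs1, hs2, hs3⟩ := good_K_exists hq hN₁1 stepctl
      (dsum_small hq rfl hrot) B₀ tail ε hε (c+2)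
  set n : ℤ := ⌊x K⌋ with hn
  have hKc : c + 2 ≤ K := hKL
  have hKne : K ≠ c := by omega
  have hK1ne : K - 1 ≠ c := by omega
  have f1 : |x K - (n:ℝ)| ≤ 1 := by
    rw [abs_le]
    constructor
    · linarith [Int.floor_le (x K)]
    · linarith [Int.lt_floor_add_one (x K)]
  have f0 : |y K - x K| ≤ ε := by
    have e : y K - x K = x (K+q) - x K - (p:ℝ) := by simp only [hydef]; ring
    rw [e]; exact hs3
  have f2 : |y K - (n:ℝ)| ≤ 2 := by
    have htri := abs_add_le (y K - x K) (x K - (n:ℝ))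
    rw [show y K - x K + (x K - (n:ℝ)) = y K - n by ring] at htri
    linarith
  have f3 : |x (K-1) - (n:ℝ)| ≤ C + 2 := by
    have h1' : |x (K-1) - x K| ≤ C := by rw [abs_sub_comm]; exact hs1
    have htri := abs_add_le (x (K-1) - x K) (x K - (n:ℝ))
    rw [show x (K-1) - x K + (x K - (n:ℝ)) = x (K-1) - n by ring] at htri
    linarith
  have f4 : |y (K-1) - (n:ℝ)| ≤ C + 3 := by
    have h1' : |y (K-1) - y K| ≤ C := by
      have e : y (K-1) - y K = x (K+q-1) - x (K+q) := by
        simp only [hydef]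
        rw [show K - 1 + q = K + q - 1 by ring]
        ring
      rw [e, abs_sub_comm]
      exact hs2
    have htri := abs_add_le (y (K-1) - y K) (y K - (n:ℝ))
    rw [show y (K-1) - y K + (y K - (n:ℝ)) = y (K-1) - n by ring] at htri
    linarith
  have hUK : U K = min (x K) (y K) := GA.1 K hKne
  have hUK1 : U (K-1) = min (x (K-1)) (y (K-1)) := GA.1 (K-1) hK1ne
  have fU1 : |U (K-1) - (n:ℝ)| ≤ D := by
    rw [hUK1]
    rcases min_cases (x (K-1)) (y (K-1)) with ⟨e, _⟩ | ⟨e, _⟩ <;> rw [e] <;> linarith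
  have fUK : |U K - (n:ℝ)| ≤ D := by
    rw [hUK]
    rcases min_cases (x K) (y K) with ⟨e, _⟩ | ⟨e, _⟩ <;> rw [e] <;> linarith
  have fV1 : |max (x (K-1)) (y (K-1)) - (n:ℝ)| ≤ D := by
    rcases max_cases (x (K-1)) (y (K-1)) with ⟨e, _⟩ | ⟨e, _⟩ <;> rw [e] <;> linarith
  have fVK : |max (x K) (y K) - (n:ℝ)| ≤ D := by
    rcases max_cases (x K) (y K) with ⟨e, _⟩ | ⟨e, _⟩ <;> rw [e] <;> linarith
  have fxK : |x K - (n:ℝ)| ≤ D := by linarith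
  have fyK : |y K - (n:ℝ)| ≤ D := by linarith
  have gU1 : |x K - U K| ≤ ε := by
    rw [hUK]
    rcases min_cases (x K) (y K) with ⟨e, _⟩ | ⟨e, _⟩ <;> rw [e]
    · rw [sub_self, abs_zero]; exact hε.le
    · rw [abs_sub_comm]; exact f0
  have gU2 : |y K - U K| ≤ ε := by
    rw [hUK]
    rcases min_cases (x K) (y K) with ⟨e, _⟩ | ⟨e, _⟩ <;> rw [e]
    · exact f0
    · rw [sub_self, abs_zero]; exact hε.le
  have gV1 : |y K - max (x K) (y K)| ≤ ε := by
    rcases max_cases (x K) (y K) with ⟨e, _⟩ | ⟨e, _⟩ <;> rw [e]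
    · exact f0
    · rw [sub_self, abs_zero]; exact hε.le
  have gV2 : |x K - max (x K) (y K)| ≤ ε := by
    rcases max_cases (x K) (y K) with ⟨e, _⟩ | ⟨e, _⟩ <;> rw [e]
    · rw [sub_self, abs_zero]; exact hε.le
    · rw [abs_sub_comm]; exact f0
  rcases le_total (x (c-2)) (y (c-2)) with hj | hj
  · have key := key_ineq h3 hx hy U c δ GA hj K hKc
    have c1 := hmod (U (K-1)) (x K) (U K) n fU1 fxK fUK gU1
    have c2 := hmod (max (x (K-1)) (y (K-1))) (y K) (max (x K) (y K)) n fV1 fyK fVK gV1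
    linarith
  · have key := key_ineq h3 hy hx U c δ (gainAt_symm GA) hj K hKc
    have c1 := hmod (U (K-1)) (y K) (U K) n fU1 fyK fUK gU2
    have fV1' : |max (y (K-1)) (x (K-1)) - (n:ℝ)| ≤ D := by rw [max_comm]; exact fV1
    have fVK' : |max (y K) (x K) - (n:ℝ)| ≤ D := by rw [max_comm]; exact fVK
    have gV2' : |x K - max (y K) (x K)| ≤ ε := by rw [max_comm]; exact gV2
    have c2 := hmod (max (y (K-1)) (x (K-1))) (x K) (max (y K) (x K)) n fV1' fxK fVK' gV2'
    linarith


/-- Trichotomy for minimal configurations with rational rotation number p/q. -/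
theorem rational_rotation_trichotomy
    (h : ℝ → ℝ → ℝ) (hcont : Continuous (Function.uncurry h))
    (h1 : CondH1 h) (h2 : CondH2 h) (h3 : CondH3 h) (h4 : CondH4 h)
    (p q : ℤ) (hq : 0 < q) (hpq : Int.gcd p q = 1)
    (x : ℤ → ℝ) (hx : MinimalConfig h x)
    (hrot : Tendsto (fun n : ℕ => x n / n) atTop (𝓝 ((p : ℝ) / q))) :
    ((∀ i : ℤ, x i + p < x (i + q)) ∧ ¬(∀ i : ℤ, x (i + q) = x i + p) ∧
        ¬(∀ i : ℤ, x (i + q) < x i + p)) ∨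
    (¬(∀ i : ℤ, x i + p < x (i + q)) ∧ (∀ i : ℤ, x (i + q) = x i + p) ∧
        ¬(∀ i : ℤ, x (i + q) < x i + p)) ∨
    (¬(∀ i : ℤ, x i + p < x (i + q)) ∧ ¬(∀ i : ℤ, x (i + q) = x i + p) ∧
        (∀ i : ℤ, x (i + q) < x i + p)) := by
  by_cases hQ : ∀ i : ℤ, x (i + q) = x i + p
  · refine Or.inr (Or.inl ⟨fun hP => ?_, hQ, fun hR => ?_⟩)
    · have h1' := hP 0; have h2' := hQ 0; linarith
    · have h1' := hR 0; have h2' := hQ 0; linarith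
  · by_cases hP : ∀ i : ℤ, x i + p < x (i + q)
    · refine Or.inl ⟨hP, hQ, fun hR => ?_⟩
      have h1' := hR 0; have h2' := hP 0; linarith
    · by_cases hR : ∀ i : ℤ, x (i + q) < x i + p
      · exact Or.inr (Or.inr ⟨hP, hQ, hR⟩)
      · exfalso
        set y : ℤ → ℝ := fun i => x (i + q) - p with hydef
        have hy : MinimalConfig h y := minimal_translate h1 hx q p
        push_neg at hP hR
        obtain ⟨a, ha⟩ := hP
        obtain ⟨b, hb⟩ := hR
        have hne : ∃ i, x i ≠ y i := by
          push_neg at hQ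
          obtain ⟨i₀, hi₀⟩ := hQ
          refine ⟨i₀, fun hc => hi₀ ?_⟩
          simp only [hydef] at hc
          linarith
        have G := gain_exists h3 h4 hx hy hne
            ⟨a, by simp only [hydef]; linarith⟩ ⟨b, by simp only [hydef]; linarith⟩
        by_cases iA : ∀ N : ℤ, ∃ K, N ≤ K ∧ x K ≤ y K
        · by_cases iB : ∀ N : ℤ, ∃ K, N ≤ K ∧ y K ≤ x K
          · exact contra_both_signs h3 hx hy G iA iB
          · push_neg at iB
            obtain ⟨B₀, hB₀⟩ := iB
            refine final_contra hcont h1 h2 h3 hx hq hrot G B₀ (Or.inl fun K hK => ?_)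
            have := hB₀ K hK
            simp only [hydef] at this
            linarith
        · push_neg at iA
          obtain ⟨B₀, hB₀⟩ := iA
          refine final_contra hcont h1 h2 h3 hx hq hrot G B₀ (Or.inr fun K hK => ?_)
          have := hB₀ K hK
          simp only [hydef] at this
          linarith
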